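/- Let G be a simple graph with n vertices and m ≥ 1 edges. If μ₁(G) < 4m/n, then G contains an odd cycle (equivalently, G is not bipartite). -/

import Mathlib

open Finset SimpleGraph
open Matrix

attribute [local instance] Classical.propDecidable

/-- The `i`-th largest value of the tuple `f` (values sorted in non-increasing order). -/
noncomputable def sortDesc {n : ℕ} (f : Fin n → ℝ) : Fin n → ℝ :=
  fun i => f (Tuple.sort f i.rev)

/-- The Laplacian eigenvalues of `G`, in non-increasing order:
`lapEig G 0 = μ₁ ≥ lapEig G 1 = μ₂ ≥ ⋯`. -/
noncomputable def lapEig {n : ℕ} (G : SimpleGraph (Fin n)) : Fin n → ℝ :=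
  sortDesc (SimpleGraph.posSemidef_lapMatrix ℝ G).isHermitian.eigenvalues

/-- The number of edges of `G`. -/
noncomputable def numEdges {n : ℕ} (G : SimpleGraph (Fin n)) : ℕ :=
  G.edgeFinset.card

/-- The singular values of the LI-matrix `LI(G) = L(G) - (2m/n)·Iₙ`, in non-increasing
order; they are the values `|μᵢ - 2m/n|` sorted non-increasingly. -/
noncomputable def LIsv {n : ℕ} (G : SimpleGraph (Fin n)) : Fin n → ℝ :=
  sortDesc (fun i => |lapEig G i - 2 * numEdges G / n|)

/-- The Ky Fan `k`-norm of the LI-matrix of `G`: the sum of the `k` largest singular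
values of `LI(G)`. -/
noncomputable def kyFanLI {n : ℕ} (G : SimpleGraph (Fin n)) (k : ℕ) : ℝ :=
  ∑ i ∈ Finset.univ.filter (fun i : Fin n => (i : ℕ) < k), LIsv G i

/-- `S_k(L(G))`, the sum of the `k` largest Laplacian eigenvalues of `G`. -/
noncomputable def lapSum {n : ℕ} (G : SimpleGraph (Fin n)) (k : ℕ) : ℝ :=
  ∑ i ∈ Finset.univ.filter (fun i : Fin n => (i : ℕ) < k), lapEig G i

lemma le_sortDesc_zero {n : ℕ} (hn : 0 < n) (f : Fin n → ℝ) (i : Fin n) :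
    f i ≤ sortDesc f ⟨0, hn⟩ := by
  have h1 : f i = (f ∘ Tuple.sort f) ((Tuple.sort f).symm i) := by simp
  rw [h1]
  exact Tuple.monotone_sort f (by
    rw [Fin.le_def]
    have := ((Tuple.sort f).symm i).isLt
    simp [Fin.rev]
    omega)

lemma rayleigh_le {n : ℕ} {A : Matrix (Fin n) (Fin n) ℝ} (hA : A.IsHermitian) (μ : ℝ)
    (hμ : ∀ i, hA.eigenvalues i ≤ μ) (x : Fin n → ℝ) :
    dotProduct x (A *ᵥ x) ≤ μ * dotProduct x x := by
  classical
  set U : Matrix (Fin n) (Fin n) ℝ := (hA.eigenvectorUnitary : Matrix (Fin n) (Fin n) ℝ) with hU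
  set y : Fin n → ℝ := star U *ᵥ x with hy
  have hxU : x ᵥ* U = y := by
    rw [hy, ← Matrix.mulVec_transpose]
    simp [Matrix.star_eq_conjTranspose, Matrix.conjTranspose_eq_transpose_of_trivial]
  have h1 : dotProduct x (A *ᵥ x) = ∑ i, hA.eigenvalues i * (y i)^2 := by
    conv_lhs => rw [hA.spectral_theorem, Unitary.conjStarAlgAut_apply]
    rw [← Matrix.mulVec_mulVec, ← Matrix.mulVec_mulVec, dotProduct_mulVec, hxU, ← hy]
    simp [dotProduct, Matrix.mulVec_diagonal]
    exact Finset.sum_congr rfl fun i _ => by ring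
  have h2 : dotProduct x x = ∑ i, (y i)^2 := by
    have hUU : U * star U = 1 := (Matrix.mem_unitaryGroup_iff).mp hA.eigenvectorUnitary.2
    have : dotProduct y y = dotProduct x x := by
      rw [show dotProduct y y = dotProduct (x ᵥ* U) y from by rw [hxU],
        ← dotProduct_mulVec, hy, Matrix.mulVec_mulVec, hUU, Matrix.one_mulVec]
    rw [← this]
    simp [dotProduct, sq]
  rw [h1, h2, Finset.mul_sum]
  exact Finset.sum_le_sum fun i _ => mul_le_mul_of_nonneg_right (hμ i) (sq_nonneg _)

/-- If `G` is a simple graph with `n` vertices and `m ≥ 1` edges and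
`μ₁(G) < 4m/n`, then `G` contains an odd cycle, i.e. `G` is not bipartite
(not 2-colorable). -/
theorem stmt_4 {n : ℕ} (hn : 0 < n) (G : SimpleGraph (Fin n))
    (hm : 1 ≤ numEdges G) (h : lapEig G ⟨0, hn⟩ < 4 * (numEdges G : ℝ) / n) :
    ¬ G.Colorable 2 := by
  classical
  intro hcol
  obtain ⟨C⟩ := hcol
  set x : Fin n → ℝ := fun i => if C i = 0 then 1 else -1 with hx
  set hA := (SimpleGraph.posSemidef_lapMatrix ℝ G).isHermitian
  set μ := lapEig G ⟨0, hn⟩ with hμdef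
  have hμ : ∀ i, hA.eigenvalues i ≤ μ := fun i => le_sortDesc_zero hn _ i
  -- quadratic form equals 4 m
  have hquad : dotProduct x ((G.lapMatrix ℝ) *ᵥ x) = 4 * (numEdges G : ℝ) := by
    rw [← Matrix.toLinearMap₂'_apply', SimpleGraph.lapMatrix_toLinearMap₂']
    have hterm : ∀ i j, (if G.Adj i j then (x i - x j)^2 else 0)
        = if G.Adj i j then (4:ℝ) else 0 := by
      intro i j
      by_cases hij : G.Adj i j
      · simp only [hij, if_true]
        have hne : C i ≠ C j := C.valid hij
        by_cases hci : C i = 0 <;> by_cases hcj : C j = 0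
        · exact absurd (hci.trans hcj.symm) hne
        · simp [hx, hci, hcj]; norm_num
        · simp [hx, hci, hcj]; norm_num
        · exact absurd ((Fin.eq_one_of_ne_zero _ hci).trans
            (Fin.eq_one_of_ne_zero _ hcj).symm) hne
      · simp [hij]
    simp_rw [hterm]
    have hdeg : ∀ i : Fin n, (∑ j, if G.Adj i j then (1:ℝ) else 0) = (G.degree i : ℝ) := by
      intro i
      rw [SimpleGraph.degree, SimpleGraph.neighborFinset_eq_filter]
      rw [Finset.card_filter]
      push_cast
      simp
    have : (∑ i, ∑ j, if G.Adj i j then (4:ℝ) else 0)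
        = 4 * ∑ i, (G.degree i : ℝ) := by
      rw [Finset.mul_sum]
      refine Finset.sum_congr rfl fun i _ => ?_
      rw [← hdeg i, Finset.mul_sum]
      exact Finset.sum_congr rfl fun j _ => by split <;> norm_num
    rw [this]
    have hsum : ∑ i, (G.degree i : ℝ) = 2 * (numEdges G : ℝ) := by
      have h := G.sum_degrees_eq_twice_card_edges
      rw [numEdges]
      exact_mod_cast congrArg (Nat.cast (R := ℝ)) h
    rw [hsum]
    ring
  have hxx : dotProduct x x = (n : ℝ) := by
    simp only [dotProduct, hx]
    have : ∀ i : Fin n, (if C i = 0 then (1:ℝ) else -1) * (if C i = 0 then (1:ℝ) else -1) = 1 := by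
      intro i; split <;> norm_num
    simp only [this, Finset.sum_const, Finset.card_univ, Fintype.card_fin, nsmul_eq_mul, mul_one]
  have hray := rayleigh_le hA μ hμ x
  rw [hquad, hxx] at hray
  have hnpos : (0:ℝ) < n := by exact_mod_cast hn
  have : 4 * (numEdges G : ℝ) / n ≤ μ := by
    rw [div_le_iff₀ hnpos]
    linarith
  linarith
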